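/- Let u : ℝ^m → [0,1] be a fuzzy set and α ∈ (0,1). Suppose y ∈ [u]_α with d(y, cl({u > α})) > ε for some ε > 0 (this in particular holds with some ε > 0 whenever y ∈ [u]_α and y ∉ cl({u > α})). Let q ∈ ℝ^m with q ≠ y and set e = (y − q)/‖y − q‖. Then there exists a rational number r ≥ ‖y − q‖ such that α is a discontinuous point of S_{u,q,r}(e, ·), i.e. α ∈ D_{u,q,r,e}. -/

import Mathlib

open Set Metric

/-- `S_{u,t,r}(e, α)`: the sup of `⟨e, x - t⟩` over `[u]_α ∩ closedBall t r`,
with value `⊥ = -∞` when this set is empty (`sSup ∅ = ⊥` in `EReal`). -/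
noncomputable def Sfun {m : ℕ} (u : EuclideanSpace ℝ (Fin m) → ℝ)
    (t : EuclideanSpace ℝ (Fin m)) (r : ℝ)
    (e : EuclideanSpace ℝ (Fin m)) (α : ℝ) : EReal :=
  sSup ((fun x => ((inner ℝ e (x - t) : ℝ) : EReal)) ''
    ({x | α ≤ u x} ∩ closedBall t r))

/-- The set `D_{u,t,r,e}` of discontinuous points `α ∈ (0,1)` of `S_{u,t,r}(e, ·)`:
(i) `S_{u,t,r}(e, α) ∈ ℝ` and (ii) either `S_{u,t,r}(e, β) = -∞` for all `β > α`, or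
`-∞ < lim_{β→α+} S = ⨆_{β > α} S < lim_{β→α-} S = ⨅_{β < α} S`. -/
noncomputable def Dset {m : ℕ} (u : EuclideanSpace ℝ (Fin m) → ℝ)
    (t : EuclideanSpace ℝ (Fin m)) (r : ℝ)
    (e : EuclideanSpace ℝ (Fin m)) : Set ℝ :=
  {α | α ∈ Ioo (0:ℝ) 1 ∧ Sfun u t r e α ≠ ⊥ ∧ Sfun u t r e α ≠ ⊤ ∧
    ((∀ β ∈ Ioc α 1, Sfun u t r e β = ⊥) ∨
      ((⊥ < ⨆ β ∈ Ioc α 1, Sfun u t r e β) ∧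
        ((⨆ β ∈ Ioc α 1, Sfun u t r e β) < ⨅ β ∈ Ico (0:ℝ) α, Sfun u t r e β)))}

/-- If `y ∈ [u]_α` with `d(y, cl({u > α})) > ε` for some `ε > 0`, and `q ≠ y`,
then with `e = (y - q)/‖y - q‖` there is a rational `r ≥ ‖y - q‖` with
`α ∈ D_{u,q,r,e}`. -/
theorem exists_rat_mem_Dset {m : ℕ} (u : EuclideanSpace ℝ (Fin m) → ℝ)
    (hu : ∀ x, u x ∈ Icc (0:ℝ) 1)
    (α : ℝ) (hα : α ∈ Ioo (0:ℝ) 1)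
    (y : EuclideanSpace ℝ (Fin m)) (hy : α ≤ u y)
    (ε : ℝ) (hε : 0 < ε)
    (hdist : ε < infDist y (closure {x | α < u x}))
    (q : EuclideanSpace ℝ (Fin m)) (hq : q ≠ y) :
    ∃ r : ℚ, ‖y - q‖ ≤ (r : ℝ) ∧
      α ∈ Dset u q (r : ℝ) (‖y - q‖⁻¹ • (y - q)) := by
  have hL : (0:ℝ) < ‖y - q‖ := norm_pos_iff.mpr (sub_ne_zero.mpr (Ne.symm hq))
  set L : ℝ := ‖y - q‖ with hLdef
  set e : EuclideanSpace ℝ (Fin m) := L⁻¹ • (y - q) with hedef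
  -- choose rational r with L < r and r^2 < L^2 + ε^2
  have hsq : L < Real.sqrt (L ^ 2 + ε ^ 2) :=
    (Real.lt_sqrt hL.le).mpr (by nlinarith)
  obtain ⟨r, hr1, hr2⟩ := exists_rat_btwn hsq
  have hr0 : (0:ℝ) < (r:ℝ) := hL.trans hr1
  have hr2' : (r:ℝ) ^ 2 < L ^ 2 + ε ^ 2 := (Real.lt_sqrt hr0.le).mp hr2
  set c : ℝ := ((r:ℝ) ^ 2 + L ^ 2 - ε ^ 2) / (2 * L) with hcdef
  have hcL : c < L := by
    rw [hcdef, div_lt_iff₀ (by linarith)]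
    nlinarith
  -- basic inner product facts
  have he_inner : (inner ℝ e (y - q) : ℝ) = L := by
    rw [hedef, real_inner_smul_left, real_inner_self_eq_norm_sq, ← hLdef]
    field_simp
  have he_norm : ‖e‖ = 1 := by
    rw [hedef, norm_smul, norm_inv, norm_norm, ← hLdef, inv_mul_cancel₀ hL.ne']
  -- y belongs to all level sets for β ≤ α
  have hy_mem : ∀ β : ℝ, β ≤ α → y ∈ {x | β ≤ u x} ∩ closedBall q (r:ℝ) := by
    intro β hβ
    refine ⟨le_trans hβ hy, ?_⟩
    rw [mem_closedBall, dist_eq_norm, ← hLdef]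
    exact hr1.le
  -- lower bound on Sfun for β ≤ α
  have hSlb : ∀ β : ℝ, β ≤ α → (L : EReal) ≤ Sfun u q (r:ℝ) e β := by
    intro β hβ
    have := le_sSup (mem_image_of_mem (fun x => ((inner ℝ e (x - q) : ℝ) : EReal))
      (hy_mem β hβ))
    rwa [he_inner] at this
  -- upper bound on Sfun
  have hSub : ∀ β : ℝ, Sfun u q (r:ℝ) e β ≤ ((r:ℝ) : EReal) := by
    intro β
    refine sSup_le ?_
    rintro z ⟨x, ⟨hx1, hx2⟩, rfl⟩
    have h1 : (inner ℝ e (x - q) : ℝ) ≤ ‖e‖ * ‖x - q‖ := real_inner_le_norm e (x - q)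
    have h2 : ‖x - q‖ ≤ (r:ℝ) := by rwa [mem_closedBall, dist_eq_norm] at hx2
    have : (inner ℝ e (x - q) : ℝ) ≤ (r:ℝ) := by
      calc (inner ℝ e (x - q) : ℝ) ≤ ‖e‖ * ‖x - q‖ := h1
        _ = ‖x - q‖ := by rw [he_norm, one_mul]
        _ ≤ (r:ℝ) := h2
    show ((inner ℝ e (x - q) : ℝ) : EReal) ≤ ((r:ℝ) : EReal)
    exact_mod_cast this
  -- key bound for β > α
  have hkey : ∀ β ∈ Ioc α 1, Sfun u q (r:ℝ) e β ≤ ((c : ℝ) : EReal) := by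
    intro β hβ
    refine sSup_le ?_
    rintro z ⟨x, ⟨hx1, hx2⟩, rfl⟩
    have hαx : α < u x := lt_of_lt_of_le hβ.1 hx1
    have hxcl : x ∈ closure {x | α < u x} := subset_closure hαx
    have hεx : ε < dist y x := lt_of_lt_of_le hdist (infDist_le_dist_of_mem hxcl)
    have hε2 : ε ^ 2 < ‖x - y‖ ^ 2 := by
      have : ε < ‖x - y‖ := by rwa [dist_eq_norm, norm_sub_rev] at hεx
      nlinarith
    have h2 : ‖x - q‖ ≤ (r:ℝ) := by rwa [mem_closedBall, dist_eq_norm] at hx2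
    have hsmul : (inner ℝ e (x - q) : ℝ) = L⁻¹ * (inner ℝ (y - q) (x - q) : ℝ) := by
      rw [hedef, real_inner_smul_left]
    have hexp : ‖x - y‖ ^ 2 = ‖x - q‖ ^ 2 - 2 * (inner ℝ (x - q) (y - q) : ℝ) + L ^ 2 := by
      have h : x - y = (x - q) - (y - q) := by abel
      rw [h, norm_sub_sq_real, ← hLdef]
    have hsymm : (inner ℝ (x - q) (y - q) : ℝ) = (inner ℝ (y - q) (x - q) : ℝ) :=
      real_inner_comm _ _
    have hip : (inner ℝ (y - q) (x - q) : ℝ) = L * (inner ℝ e (x - q) : ℝ) := by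
      rw [hsmul]
      field_simp
    have hfinal : (inner ℝ e (x - q) : ℝ) ≤ c := by
      have h2sq : ‖x - q‖ ^ 2 ≤ (r:ℝ) ^ 2 := by
        nlinarith [norm_nonneg (x - q)]
      rw [hcdef, le_div_iff₀ (by linarith)]
      nlinarith [hε2, hexp, hsymm, hip, h2sq]
    show ((inner ℝ e (x - q) : ℝ) : EReal) ≤ ((c:ℝ) : EReal)
    exact_mod_cast hfinal
  refine ⟨r, hr1.le, hα, ?_, ?_, ?_⟩
  · intro h
    have := hSlb α le_rfl
    rw [h, le_bot_iff] at this
    exact EReal.coe_ne_bot L this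
  · exact (lt_of_le_of_lt (hSub α) (EReal.coe_lt_top _)).ne
  · by_cases hb : ∀ β ∈ Ioc α 1, Sfun u q (r:ℝ) e β = ⊥
    · exact Or.inl hb
    · right
      push_neg at hb
      obtain ⟨β₀, hβ₀, hne⟩ := hb
      constructor
      · exact lt_of_lt_of_le hne.bot_lt
          (le_iSup₂ (f := fun β (_ : β ∈ Ioc α 1) => Sfun u q (r:ℝ) e β) β₀ hβ₀)
      · have h1 : (⨆ β ∈ Ioc α 1, Sfun u q (r:ℝ) e β) ≤ ((c:ℝ) : EReal) :=
          iSup₂_le hkey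
        have h2 : ((L:ℝ) : EReal) ≤ ⨅ β ∈ Ico (0:ℝ) α, Sfun u q (r:ℝ) e β :=
          le_iInf₂ fun β hβ => hSlb β hβ.2.le
        refine lt_of_le_of_lt h1 (lt_of_lt_of_le ?_ h2)
        exact_mod_cast hcL
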